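/- For all integers k ≥ 1 and 0 ≤ r ≤ m−1, the generating function of the counts h_{n,k,r} is the (mk−r)-th power of the Fuss–Catalan generating function: Σ_{n≥0} h_{n,k,r} x^n = B(x)^{mk−r} as formal power series in ℤ[[x]]. -/

import Mathlib

open scoped Classical
open Finset

noncomputable section

/-- The set of positive nondecreasing sequences of length `n` bounded above by `b` is finite. -/
lemma boundedSeq_finite (n : ℕ) (b : ℕ → ℕ) :
    {p : Fin n → ℕ | Monotone p ∧ ∀ i : Fin n, 1 ≤ p i ∧ p i ≤ b i}.Finite := by
  have h : {p : Fin n → ℕ | Monotone p ∧ ∀ i : Fin n, 1 ≤ p i ∧ p i ≤ b i} ⊆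
      Set.pi Set.univ (fun i : Fin n => Set.Iic (b i)) := by
    intro p hp
    rw [Set.mem_pi]
    intro i _
    exact (hp.2 i).2
  exact (Set.Finite.pi fun i : Fin n => Set.finite_Iic (b (i : ℕ))).subset h

/-- The finset of nondecreasing sequences `p : Fin n → ℕ` of positive integers
with `p i ≤ b i` for all `i`. -/
def BSeq (n : ℕ) (b : ℕ → ℕ) : Finset (Fin n → ℕ) := (boundedSeq_finite n b).toFinset

/-- `PK m n` : the u-parking distributions of length `n`, i.e. nondecreasing sequences
of positive integers with `p i ≤ m*(i-1)+1` (here indexed from `0`, so `p i ≤ m*i+1`). -/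
def PK (m n : ℕ) : Finset (Fin n → ℕ) := BSeq n (fun i => m * i + 1)

/-- `luck p` : the number of indices `i` with `p i = m*(i-1)+1` (0-indexed: `m*i+1`). -/
def luck (m : ℕ) {n : ℕ} (p : Fin n → ℕ) : ℕ :=
  (Finset.univ.filter (fun i : Fin n => p i = m * (i : ℕ) + 1)).card

/-- `freq j p` = `ω_j(p)` : the number of indices `i` with `p i = j`. -/
def freq (j : ℕ) {n : ℕ} (p : Fin n → ℕ) : ℕ :=
  (Finset.univ.filter (fun i : Fin n => p i = j)).card

/-- `hcnt m n k r` = `h_{n,k,r}` : the number of nondecreasing sequences of positive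
integers with `p_i ≤ m*(i+k-1) - r` for `1 ≤ i ≤ n` (0-indexed: `p i ≤ m*(i+k) - r`). -/
def hcnt (m n k r : ℕ) : ℕ := (BSeq n (fun i => m * (i + k) - r)).card

/-- `Cnt m n k` = `C_{n,k}` : the number of `p ∈ PK m n` with `luck p = k`. -/
def Cnt (m n k : ℕ) : ℕ := ((PK m n).filter (fun p => luck m p = k)).card

/-- `Rpoly m n` = `R_n(q) = Σ_k C_{n,k} q^k ∈ ℤ[q]`. -/
def Rpoly (m n : ℕ) : Polynomial ℤ :=
  ∑ k ∈ Finset.range (n + 1), (Cnt m n k : Polynomial ℤ) * Polynomial.X ^ k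

/-- `hfull t k` : the complete homogeneous symmetric polynomial of degree `k`
in variables `q_0, …, q_{t-1}`, i.e. the sum of all monomials of total degree `k`. -/
def hfull (t k : ℕ) : MvPolynomial (Fin t) ℤ :=
  ∑ α ∈ Finset.Nat.antidiagonalTuple t k, ∏ i : Fin t, MvPolynomial.X i ^ α i

/-- `ffix m p ℓ` = `i_ℓ(p)` : the first fixed point of type `ℓ`, the smallest `k` with
`2 ≤ k ≤ n` and `p_k ≥ m*(k-2)+1+ℓ` (1-indexed), or `n+1` if there is none. -/
def ffix (m : ℕ) {n : ℕ} (p : Fin n → ℕ) (ℓ : ℕ) : ℕ :=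
  sInf ({k | 2 ≤ k ∧ ∃ i : Fin n, (i : ℕ) + 1 = k ∧ m * (k - 2) + 1 + ℓ ≤ p i} ∪ {n + 1})

/-- The extended first fixed points: `i_0 = 2`, `i_{m+1} = n+1`, and `i_ℓ = ffix m p ℓ`
for `1 ≤ ℓ ≤ m`. -/
def ffixE (m : ℕ) {n : ℕ} (p : Fin n → ℕ) (j : ℕ) : ℕ :=
  if j = 0 then 2 else if j = m + 1 then n + 1 else ffix m p j

/-- `pget p k` = `p_k` (1-indexed), `0` out of range. -/
def pget {n : ℕ} (p : Fin n → ℕ) (k : ℕ) : ℕ := if h : k - 1 < n then p ⟨k - 1, h⟩ else 0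

/-- The `(ℓ+1)`-st part `P_{ℓ+1}` (for `0 ≤ ℓ ≤ m`) of the first-return decomposition of `p`:
the list `(p_k - (p_{i_ℓ} - 1))` for `i_ℓ ≤ k ≤ i_{ℓ+1} - 1`. -/
def FRD (m : ℕ) {n : ℕ} (p : Fin n → ℕ) (ℓ : ℕ) : List ℕ :=
  (List.range (ffixE m p (ℓ + 1) - ffixE m p ℓ)).map
    (fun t => pget p (ffixE m p ℓ + t) - (pget p (ffixE m p ℓ) - 1))

/-- A list is a u-parking distribution: nondecreasing, with `l.get i ∈ [1, m*i+1]`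
(0-indexed). -/
def isPKlist (m : ℕ) (l : List ℕ) : Prop :=
  l.Pairwise (· ≤ ·) ∧ ∀ i : Fin l.length, 1 ≤ l.get i ∧ l.get i ≤ m * (i : ℕ) + 1

/-- `θ(p)` : the nondecreasing rearrangement of the concatenation of `p` with the list of
all `j ∈ {1, …, m*n-m+1}` with `j ≢ 1 (mod m)`. -/
def theta (m n : ℕ) (p : Fin n → ℕ) : List ℕ :=
  Multiset.sort
    ((List.ofFn p : Multiset ℕ) +
      (((List.range (m * n - m + 1)).map (· + 1)).filter
        (fun j => ¬ j ≡ 1 [MOD m]) : List ℕ)) (· ≤ ·)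

/-- Parking distributions on the `m`-caterpillar of length `n`, as nondecreasing lists. -/
def PKcat (m n : ℕ) : Set (List ℕ) :=
  {a | a.length = m * n - m + 1 ∧ a.Pairwise (· ≤ ·) ∧
       (∀ x ∈ a, 1 ≤ x ∧ x ≤ m * n - m + 1) ∧
       (∀ i : ℕ, 1 ≤ i → i ≤ n →
         m * (i - 1) + 1 ≤ (a.filter (fun x => x ≤ m * (i - 1) + 1)).length) ∧
       (∀ j : ℕ, 1 ≤ j → j ≤ m * n - m + 1 → ¬ j ≡ 1 [MOD m] → j ∈ a)}

lemma mem_BSeq {n : ℕ} {b : ℕ → ℕ} {p : Fin n → ℕ} :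
    p ∈ BSeq n b ↔ Monotone p ∧ ∀ i : Fin n, 1 ≤ p i ∧ p i ≤ b i := by
  simp [BSeq, Set.Finite.mem_toFinset, Set.mem_setOf_eq]

/-- the first index where `p` exceeds the tight bound `m*i+1`, or `n`. -/
def splitIdx (m : ℕ) {n : ℕ} (p : Fin n → ℕ) : ℕ :=
  sInf {i | i = n ∨ ∃ h : i < n, m * i + 2 ≤ p ⟨i, h⟩}

lemma splitIdx_ne (m n : ℕ) (p : Fin n → ℕ) :
    {i | i = n ∨ ∃ h : i < n, m * i + 2 ≤ p ⟨i, h⟩}.Nonempty :=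
  ⟨n, Or.inl rfl⟩

lemma splitIdx_le (m : ℕ) {n : ℕ} (p : Fin n → ℕ) : splitIdx m p ≤ n :=
  Nat.sInf_le (Or.inl rfl)

lemma splitIdx_lt_bound (m : ℕ) {n : ℕ} (p : Fin n → ℕ) {i : ℕ} (h : i < n)
    (hij : i < splitIdx m p) : p ⟨i, h⟩ ≤ m * i + 1 := by
  by_contra hc
  have h2 : i ∈ {i | i = n ∨ ∃ h : i < n, m * i + 2 ≤ p ⟨i, h⟩} := Or.inr ⟨h, by omega⟩
  have h3 : splitIdx m p ≤ i := Nat.sInf_le h2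
  omega

lemma splitIdx_self (m : ℕ) {n : ℕ} (p : Fin n → ℕ) (h : splitIdx m p < n) :
    m * splitIdx m p + 2 ≤ p ⟨splitIdx m p, h⟩ := by
  have hmem : splitIdx m p ∈ {i | i = n ∨ ∃ h : i < n, m * i + 2 ≤ p ⟨i, h⟩} :=
    Nat.sInf_mem (splitIdx_ne m n p)
  rcases hmem with h' | ⟨h', h2⟩
  · omega
  · exact h2

lemma fiber_card (m t n j : ℕ) (hjn : j ≤ n) :
    (((BSeq n (fun i => m * i + t + 1)).filter (fun p => splitIdx m p = j)).card)
      = (BSeq j (fun i => m * i + 1)).card * (BSeq (n - j) (fun i => m * i + t)).card := by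
  rw [← Finset.card_product]
  refine Finset.card_nbij'
    (i := fun p => (fun i : Fin j => p ⟨i, by have := i.2; omega⟩,
      fun s : Fin (n - j) => p ⟨j + s, by have := s.2; omega⟩ - (m * j + 1)))
    (j := fun uq => fun i : Fin n =>
      if h : (i : ℕ) < j then uq.1 ⟨i, h⟩
      else uq.2 ⟨(i : ℕ) - j, by have := i.2; omega⟩ + (m * j + 1))
    ?_ ?_ ?_ ?_
  · -- forward lands in product
    intro p hp
    rw [Finset.mem_coe, Finset.mem_filter, mem_BSeq] at hp
    obtain ⟨⟨hmono, hbd⟩, hsp⟩ := hp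
    have base : ∀ s : Fin (n - j), m * j + 2 ≤ p ⟨j + s, by have := s.2; omega⟩ := by
      intro s
      have hjlt : j < n := by have := s.2; omega
      have h1 : m * splitIdx m p + 2 ≤ p ⟨splitIdx m p, hsp ▸ hjlt⟩ :=
        splitIdx_self m p (hsp ▸ hjlt)
      have h1' : m * j + 2 ≤ p ⟨j, hjlt⟩ := by
        subst hsp; exact h1
      have h2 : p ⟨j, hjlt⟩ ≤ p ⟨j + s, by have := s.2; omega⟩ :=
        hmono (Fin.mk_le_mk.mpr (by omega))
      omega
    rw [Finset.mem_coe, Finset.mem_product]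
    constructor
    · rw [mem_BSeq]
      constructor
      · intro a b hab
        exact hmono (Fin.mk_le_mk.mpr hab)
      · intro i
        have h1 : 1 ≤ p ⟨(i : ℕ), by have := i.2; omega⟩ := (hbd _).1
        have h2 : p ⟨(i : ℕ), by have := i.2; omega⟩ ≤ m * (i : ℕ) + 1 :=
          splitIdx_lt_bound m p _ (by have := i.2; omega)
        exact ⟨h1, h2⟩
    · rw [mem_BSeq]
      constructor
      · intro a b hab
        exact Nat.sub_le_sub_right (hmono (Fin.mk_le_mk.mpr (by omega))) _
      · intro s
        have h1 := base s
        have h2 : p ⟨j + (s : ℕ), by have := s.2; omega⟩ ≤ m * (j + (s : ℕ)) + t + 1 :=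
          (hbd ⟨j + (s : ℕ), by have := s.2; omega⟩).2
        have h3 : m * (j + (s : ℕ)) = m * j + m * (s : ℕ) := Nat.mul_add m j (s : ℕ)
        dsimp only
        exact ⟨by omega, by omega⟩
  · -- backward lands in fiber
    rintro ⟨u, q⟩ huq
    rw [Finset.mem_coe, Finset.mem_product] at huq
    obtain ⟨hu, hq⟩ := huq
    rw [mem_BSeq] at hu hq
    obtain ⟨humono, hubd⟩ := hu
    obtain ⟨hqmono, hqbd⟩ := hq
    rw [Finset.mem_coe, Finset.mem_filter, mem_BSeq]
    have key : Monotone (fun i : Fin n =>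
        if h : (i : ℕ) < j then u ⟨i, h⟩
        else q ⟨(i : ℕ) - j, by have := i.2; omega⟩ + (m * j + 1)) := by
      intro a b hab
      have hab' : (a : ℕ) ≤ (b : ℕ) := hab
      dsimp only
      rcases lt_or_ge (a : ℕ) j with ha | ha
      · rcases lt_or_ge (b : ℕ) j with hb | hb
        · rw [dif_pos ha, dif_pos hb]
          exact humono (Fin.mk_le_mk.mpr hab')
        · rw [dif_pos ha, dif_neg (by omega : ¬ (b : ℕ) < j)]
          have h1 : u ⟨(a : ℕ), ha⟩ ≤ m * (a : ℕ) + 1 := (hubd _).2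
          have h2 : m * (a : ℕ) ≤ m * j := Nat.mul_le_mul_left m (by omega)
          omega
      · have hb : j ≤ (b : ℕ) := le_trans ha hab'
        rw [dif_neg (by omega : ¬ (a : ℕ) < j), dif_neg (by omega : ¬ (b : ℕ) < j)]
        have h1 : q ⟨(a : ℕ) - j, by have := a.2; omega⟩ ≤
            q ⟨(b : ℕ) - j, by have := b.2; omega⟩ :=
          hqmono (Fin.mk_le_mk.mpr (by omega))
        omega
    refine ⟨⟨key, ?_⟩, ?_⟩
    · intro i
      dsimp only
      rcases lt_or_ge (i : ℕ) j with hi | hi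
      · rw [dif_pos hi]
        have h1 : 1 ≤ u ⟨(i : ℕ), hi⟩ := (hubd _).1
        have h2 : u ⟨(i : ℕ), hi⟩ ≤ m * (i : ℕ) + 1 := (hubd _).2
        exact ⟨h1, by omega⟩
      · rw [dif_neg (by omega : ¬ (i : ℕ) < j)]
        have h2 : q ⟨(i : ℕ) - j, by have := i.2; omega⟩ ≤ m * ((i : ℕ) - j) + t :=
          (hqbd _).2
        have h3 : m * ((i : ℕ) - j) + m * j = m * (i : ℕ) := by
          rw [← Nat.mul_add]
          congr 1
          omega
        constructor <;> omega
    · -- splitIdx = j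
      apply le_antisymm
      · apply Nat.sInf_le
        rcases eq_or_lt_of_le hjn with h | h
        · exact Or.inl h
        · refine Or.inr ⟨h, ?_⟩
          dsimp only
          rw [dif_neg (by omega : ¬ j < j)]
          have h1 : 1 ≤ q ⟨j - j, by omega⟩ := (hqbd _).1
          omega
      · apply le_csInf ⟨n, Or.inl rfl⟩
        rintro i (rfl | ⟨hi, h2⟩)
        · exact hjn
        · by_contra hc
          dsimp only at h2
          rw [dif_pos (by omega : i < j)] at h2
          have h3 : u ⟨i, by omega⟩ ≤ m * i + 1 := (hubd _).2
          omega
  · -- left inverse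
    intro p hp
    rw [Finset.mem_coe, Finset.mem_filter, mem_BSeq] at hp
    obtain ⟨⟨hmono, hbd⟩, hsp⟩ := hp
    dsimp only
    funext i
    rcases lt_or_ge (i : ℕ) j with hi | hi
    · rw [dif_pos hi]
    · rw [dif_neg (by omega : ¬ (i : ℕ) < j)]
      have hjlt : j < n := by have := i.2; omega
      have h1 : m * splitIdx m p + 2 ≤ p ⟨splitIdx m p, hsp ▸ hjlt⟩ :=
        splitIdx_self m p (hsp ▸ hjlt)
      have h1' : m * j + 2 ≤ p ⟨j, hjlt⟩ := by subst hsp; exact h1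
      have h3 : (⟨j + ((i : ℕ) - j), by have := i.2; omega⟩ : Fin n) = i := by
        apply Fin.ext
        simp only [Fin.val_mk]
        omega
      have h2 : p ⟨j, hjlt⟩ ≤ p i := hmono (by rw [← h3]; exact Fin.mk_le_mk.mpr (by omega))
      rw [h3]
      omega
  · -- right inverse
    rintro ⟨u, q⟩ huq
    dsimp only
    refine Prod.ext ?_ ?_
    · funext i
      dsimp only
      rw [dif_pos i.2]
    · funext s
      dsimp only
      rw [dif_neg (by omega : ¬ (j + (s : ℕ)) < j)]
      have h3 : (⟨j + (s : ℕ) - j, by have := s.2; omega⟩ : Fin (n - j)) = s := by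
        apply Fin.ext
        simp only [Fin.val_mk]
        omega
      rw [h3]
      omega


lemma conv (m t n : ℕ) :
    (BSeq n (fun i => m * i + t + 1)).card
      = ∑ j ∈ Finset.range (n + 1),
          (BSeq j (fun i => m * i + 1)).card * (BSeq (n - j) (fun i => m * i + t)).card := by
  rw [Finset.card_eq_sum_card_fiberwise
    (f := fun p => splitIdx m p) (t := Finset.range (n + 1))
    (fun p _ => Finset.mem_range.mpr (Nat.lt_succ_of_le (splitIdx_le m p)))]
  exact Finset.sum_congr rfl fun j hj =>
    fiber_card m t n j (Nat.lt_succ_iff.mp (Finset.mem_range.mp hj))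

lemma BSeq_zero_card (b : ℕ → ℕ) : (BSeq 0 b).card = 1 := by
  rw [Finset.card_eq_one]
  refine ⟨fun i => i.elim0, ?_⟩
  ext p
  simp only [mem_BSeq, Finset.mem_singleton]
  constructor
  · intro _
    funext i
    exact i.elim0
  · rintro rfl
    exact ⟨fun a b _ => le_rfl, fun i => i.elim0⟩

lemma BSeq_t0 (m n : ℕ) : (BSeq (n + 1) (fun i => m * i)).card = 0 := by
  rw [Finset.card_eq_zero]
  ext p
  simp only [mem_BSeq, Finset.notMem_empty, iff_false, not_and]
  intro hmono hbd
  have h1 : 1 ≤ p 0 := (hbd 0).1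
  have h2 : p 0 ≤ m * ((0 : Fin (n + 1)) : ℕ) := (hbd 0).2
  simp at h2
  omega

lemma gen_pow (m : ℕ) : ∀ t : ℕ,
    (PowerSeries.mk fun n => ((BSeq n (fun i => m * i + t)).card : ℤ))
      = (PowerSeries.mk fun n => ((BSeq n (fun i => m * i + 1)).card : ℤ)) ^ t := by
  intro t
  induction t with
  | zero =>
    ext n
    rw [PowerSeries.coeff_mk, pow_zero, PowerSeries.coeff_one]
    cases n with
    | zero => simp [BSeq_zero_card]
    | succ n =>
      have hb : (fun i : ℕ => m * i + 0) = fun i : ℕ => m * i := by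
        funext i
        omega
      simp [hb, BSeq_t0 m n]
  | succ t ih =>
    ext n
    rw [pow_succ', ← ih, PowerSeries.coeff_mk, PowerSeries.coeff_mul,
      Finset.Nat.sum_antidiagonal_eq_sum_range_succ_mk]
    have hb : (fun i : ℕ => m * i + (t + 1)) = (fun i : ℕ => m * i + t + 1) := by
      funext i
      omega
    rw [hb, conv m t n]
    push_cast
    refine Finset.sum_congr rfl fun j hj => ?_
    rw [PowerSeries.coeff_mk, PowerSeries.coeff_mk]

theorem stmt4 (m : ℕ) (hm : 1 ≤ m) (k r : ℕ) (hk : 1 ≤ k) (hr : r ≤ m - 1) :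
    (PowerSeries.mk fun n => (hcnt m n k r : ℤ)) =
      (PowerSeries.mk fun n => ((PK m n).card : ℤ)) ^ (m * k - r) := by
  have hmk : m ≤ m * k := Nat.le_mul_of_pos_right m hk
  have hrk : r ≤ m * k := by omega
  have hb : (fun i : ℕ => m * (i + k) - r) = (fun i : ℕ => m * i + (m * k - r)) := by
    funext i
    have h := Nat.mul_add m i k
    omega
  show (PowerSeries.mk fun n => ((BSeq n (fun i => m * (i + k) - r)).card : ℤ)) = _
  rw [hb]
  exact gen_pow m (m * k - r)

end
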